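/- Let F be a field, A ∈ F^n⊗F^m a tensor, and let u_1⊗v_1,…,u_s⊗v_s ∈ F^n⊗F^m be pure tensors (u_k ∈ F^n, v_k ∈ F^m) spanning a subspace U. Define Â = A⊗e_{s+1} + Σ_{k=1}^s u_k⊗v_k⊗e_k ∈ F^n⊗F^m⊗F^{s+1}. Then rank(Â) ≤ rank(A,U) + s, where rank(A,U) = min{rank(B) : B ∈ A+U} and rank denotes tensor rank. -/

import Mathlib

open TensorProduct

/-- The tensor rank of a second-order tensor `T ∈ Fⁿ ⊗ Fᵐ`: the smallest number of
pure tensors `x ⊗ y` summing to `T`. -/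
noncomputable def tensorRank2 {F : Type*} [Field F] {n m : ℕ}
    (T : (Fin n → F) ⊗[F] (Fin m → F)) : ℕ :=
  sInf {r : ℕ | ∃ (x : Fin r → Fin n → F) (y : Fin r → Fin m → F),
    T = ∑ i : Fin r, x i ⊗ₜ[F] y i}

/-- The tensor rank of a third-order tensor `T ∈ Fⁿ ⊗ Fᵐ ⊗ Fᵖ`: the smallest number of
pure tensors `x ⊗ y ⊗ z` summing to `T`. -/
noncomputable def tensorRank3 {F : Type*} [Field F] {n m p : ℕ}
    (T : ((Fin n → F) ⊗[F] (Fin m → F)) ⊗[F] (Fin p → F)) : ℕ :=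
  sInf {r : ℕ | ∃ (x : Fin r → Fin n → F) (y : Fin r → Fin m → F) (z : Fin r → Fin p → F),
    T = ∑ i : Fin r, (x i ⊗ₜ[F] y i) ⊗ₜ[F] z i}

/-- `rank(A, U) = min { rank B | B ∈ A + U }`. -/
noncomputable def rankAU {F : Type*} [Field F] {n m : ℕ}
    (A : (Fin n → F) ⊗[F] (Fin m → F))
    (U : Submodule F ((Fin n → F) ⊗[F] (Fin m → F))) : ℕ :=
  sInf {r : ℕ | ∃ u ∈ U, tensorRank2 (A + u) = r}

lemma exists_rep2 {F : Type*} [Field F] {n m : ℕ}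
    (T : (Fin n → F) ⊗[F] (Fin m → F)) :
    ∃ (r : ℕ) (x : Fin r → Fin n → F) (y : Fin r → Fin m → F),
      T = ∑ i : Fin r, x i ⊗ₜ[F] y i := by
  induction T with
  | zero => exact ⟨0, ![], ![], by simp⟩
  | tmul a b => exact ⟨1, ![a], ![b], by simp⟩
  | add T₁ T₂ h₁ h₂ =>
    obtain ⟨r₁, x₁, y₁, h₁⟩ := h₁
    obtain ⟨r₂, x₂, y₂, h₂⟩ := h₂
    refine ⟨r₁ + r₂, Fin.addCases x₁ x₂, Fin.addCases y₁ y₂, ?_⟩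
    rw [Fin.sum_univ_add]
    simp [h₁, h₂]

set_option maxHeartbeats 1000000

/-- `rank(Â) ≤ rank(A,U) + s`. -/
theorem tensorRank_hat_le {F : Type*} [Field F] {n m s : ℕ}
    (A : (Fin n → F) ⊗[F] (Fin m → F))
    (u : Fin s → Fin n → F) (v : Fin s → Fin m → F)
    (U : Submodule F ((Fin n → F) ⊗[F] (Fin m → F)))
    (hU : U = Submodule.span F (Set.range fun k : Fin s => u k ⊗ₜ[F] v k)) :
    tensorRank3
      (A ⊗ₜ[F] (Pi.single (Fin.last s) 1 : Fin (s + 1) → F)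
        + ∑ k : Fin s, (u k ⊗ₜ[F] v k) ⊗ₜ[F]
            (Pi.single (Fin.castSucc k) 1 : Fin (s + 1) → F))
      ≤ rankAU A U + s := by
  have hne : {r : ℕ | ∃ u ∈ U, tensorRank2 (A + u) = r}.Nonempty :=
    ⟨tensorRank2 (A + 0), 0, U.zero_mem, rfl⟩
  obtain ⟨u₀, hu₀, hr⟩ := Nat.sInf_mem hne
  have hmem : ∃ (x : Fin (tensorRank2 (A + u₀)) → Fin n → F)
      (y : Fin (tensorRank2 (A + u₀)) → Fin m → F),
      A + u₀ = ∑ i, x i ⊗ₜ[F] y i := by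
    have hne2 : {r : ℕ | ∃ (x : Fin r → Fin n → F) (y : Fin r → Fin m → F),
        A + u₀ = ∑ i : Fin r, x i ⊗ₜ[F] y i}.Nonempty := by
      obtain ⟨r, x, y, h⟩ := exists_rep2 (A + u₀)
      exact ⟨r, x, y, h⟩
    exact Nat.sInf_mem hne2
  rw [hU] at hu₀
  obtain ⟨c, hc⟩ := (Submodule.mem_span_range_iff_exists_fun F).mp hu₀
  rw [rankAU, ← hr]
  clear hr hne hu₀ hU
  revert hmem
  generalize tensorRank2 (A + u₀) = r
  rintro ⟨x, y, hB⟩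
  apply Nat.sInf_le
  refine ⟨Fin.addCases x u, Fin.addCases y v,
    Fin.addCases (fun _ => Pi.single (Fin.last s) 1)
      (fun k => (Pi.single (Fin.castSucc k) 1 : Fin (s+1) → F)
        - c k • (Pi.single (Fin.last s) 1 : Fin (s+1) → F)), ?_⟩
  rw [Fin.sum_univ_add]
  simp only [Fin.addCases_left, Fin.addCases_right]
  have h1 : ∑ i, (x i ⊗ₜ[F] y i) ⊗ₜ[F] (Pi.single (Fin.last s) 1 : Fin (s+1) → F)
      = (A + u₀) ⊗ₜ[F] (Pi.single (Fin.last s) 1 : Fin (s+1) → F) := by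
    rw [← sum_tmul, ← hB]
  have h2 : ∑ k : Fin s, (u k ⊗ₜ[F] v k) ⊗ₜ[F]
      ((Pi.single (Fin.castSucc k) 1 : Fin (s+1) → F)
        - c k • (Pi.single (Fin.last s) 1 : Fin (s+1) → F))
      = (∑ k : Fin s, (u k ⊗ₜ[F] v k) ⊗ₜ[F] (Pi.single (Fin.castSucc k) 1 : Fin (s+1) → F))
        - u₀ ⊗ₜ[F] (Pi.single (Fin.last s) 1 : Fin (s+1) → F) := by
    calc ∑ k : Fin s, (u k ⊗ₜ[F] v k) ⊗ₜ[F]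
          ((Pi.single (Fin.castSucc k) 1 : Fin (s+1) → F)
            - c k • (Pi.single (Fin.last s) 1 : Fin (s+1) → F))
        = ∑ k : Fin s,
            ((u k ⊗ₜ[F] v k) ⊗ₜ[F] (Pi.single (Fin.castSucc k) 1 : Fin (s+1) → F)
              - (c k • (u k ⊗ₜ[F] v k)) ⊗ₜ[F] (Pi.single (Fin.last s) 1 : Fin (s+1) → F)) := by
          refine Finset.sum_congr rfl fun k _ => ?_
          rw [tmul_sub, tmul_smul, smul_tmul']
      _ = (∑ k : Fin s, (u k ⊗ₜ[F] v k) ⊗ₜ[F] (Pi.single (Fin.castSucc k) 1 : Fin (s+1) → F))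
            - ∑ k : Fin s, (c k • (u k ⊗ₜ[F] v k)) ⊗ₜ[F]
                (Pi.single (Fin.last s) 1 : Fin (s+1) → F) :=
          Finset.sum_sub_distrib
            (G := ((Fin n → F) ⊗[F] (Fin m → F)) ⊗[F] (Fin (s+1) → F)) _ _
      _ = _ := by rw [← sum_tmul, hc]
  rw [h1, h2, add_tmul]
  abel_nf
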